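/- Let f : ℝ → ℂ satisfy f(t) = exp(itγ + Σ_{u} λ(u)(e^{itu} − 1)) for all t ∈ ℝ, where γ ∈ ℝ and λ : ℝ → ℝ has countable support, λ(0) = 0, and Σ_u |λ(u)| < ∞. If θ : ℝ → ℝ is any continuous function with θ(0) = 0 and f(t) = |f(t)|·e^{iθ(t)} for all t ∈ ℝ, then |θ(t) − tγ| ≤ Σ_u |λ(u)| for all t, and consequently θ(T)/T → γ as T → ∞ (γ is the 'mean motion' of the argument of f). -/

import Mathlib

open Complex Filter

/-- If `f(t) = exp(itγ + ∑_u λ(u)(e^{itu} − 1))` with `∑_u |λ(u)| < ∞`,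
and `θ` is a continuous determination of the argument of `f` with `θ(0) = 0`, then
`|θ(t) − tγ| ≤ ∑_u |λ(u)|` for all `t`, and hence `θ(T)/T → γ` as `T → ∞`:
`γ` is the mean motion of the argument of `f`. -/
theorem mean_motion_of_argument
    (f : ℝ → ℂ) (γ : ℝ) (l : ℝ → ℝ)
    (hcount : (Function.support l).Countable) (hl0 : l 0 = 0)
    (hsum : Summable fun u : ℝ => |l u|)
    (hf : ∀ t : ℝ, f t = Complex.exp (Complex.I * (t : ℂ) * (γ : ℂ) +
      ∑' u : ℝ, (l u : ℂ) * (Complex.exp (Complex.I * (t : ℂ) * (u : ℂ)) - 1)))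
    (θ : ℝ → ℝ) (hθcont : Continuous θ) (hθ0 : θ 0 = 0)
    (hθ : ∀ t : ℝ, f t = (‖f t‖ : ℂ) * Complex.exp (Complex.I * (θ t : ℂ))) :
    (∀ t : ℝ, |θ t - t * γ| ≤ ∑' u : ℝ, |l u|) ∧
      Tendsto (fun T : ℝ => θ T / T) atTop (nhds γ) := by
  set C : ℝ := ∑' u : ℝ, |l u| with hCdef
  set F : ℝ → ℝ → ℂ := fun u t => (l u : ℂ) * (Complex.exp (Complex.I * (t : ℂ) * (u : ℂ)) - 1)
    with hFdef
  have hFnorm : ∀ u t : ℝ, ‖F u t‖ ≤ 2 * |l u| := by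
    intro u t
    have habs : ‖Complex.exp (Complex.I * (t : ℂ) * (u : ℂ))‖ = 1 := by
      rw [Complex.norm_exp]; simp
    calc ‖F u t‖ = |l u| * ‖Complex.exp (Complex.I * (t : ℂ) * (u : ℂ)) - 1‖ := by
          simp [hFdef, Complex.norm_real]
      _ ≤ |l u| * 2 := by
          refine mul_le_mul_of_nonneg_left ?_ (abs_nonneg _)
          calc ‖Complex.exp (Complex.I * (t : ℂ) * (u : ℂ)) - 1‖
              ≤ ‖Complex.exp (Complex.I * (t : ℂ) * (u : ℂ))‖ + ‖(1 : ℂ)‖ := norm_sub_le _ _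
            _ ≤ 2 := by
                rw [show ‖Complex.exp (Complex.I * (t : ℂ) * (u : ℂ))‖
                  = ‖Complex.exp (Complex.I * (t : ℂ) * (u : ℂ))‖ from rfl, habs]
                norm_num
      _ = 2 * |l u| := by ring
  have hFsum : ∀ t : ℝ, Summable fun u => F u t := fun t =>
    Summable.of_norm_bounded (hsum.mul_left 2) (fun u => hFnorm u t)
  set G : ℝ → ℂ := fun t => ∑' u : ℝ, F u t with hGdef
  have hGcont : Continuous G := by
    refine continuous_tsum (fun u => ?_) (hsum.mul_left 2) (fun u t => hFnorm u t)
    exact continuous_const.mul ((Complex.continuous_exp.comp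
      ((continuous_const.mul Complex.continuous_ofReal).mul continuous_const)).sub
      continuous_const)
  set A : ℝ → ℂ := fun t => Complex.I * (t : ℂ) * (γ : ℂ) + G t with hAdef
  have hAcont : Continuous A :=
    ((continuous_const.mul Complex.continuous_ofReal).mul continuous_const).add hGcont
  have hfA : ∀ t : ℝ, f t = Complex.exp (A t) := hf
  have hAim : ∀ t : ℝ, (A t).im = t * γ + (G t).im := by
    intro t; simp [hAdef]
  have hGim_bound : ∀ t : ℝ, |(G t).im| ≤ C := by
    intro t
    have h1 : (G t).im = ∑' u : ℝ, (F u t).im := Complex.im_tsum (hFsum t)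
    have himb : ∀ u : ℝ, |(F u t).im| ≤ |l u| := by
      intro u
      have hFim : (F u t).im = l u * (Complex.exp (Complex.I * (t : ℂ) * (u : ℂ))).im := by
        simp [hFdef]
      have him : (Complex.exp (Complex.I * (t : ℂ) * (u : ℂ))).im = Real.sin (t * u) := by
        have h2 := Complex.exp_ofReal_mul_I_im (t * u)
        rw [show ((t * u : ℝ) : ℂ) * Complex.I = Complex.I * (t : ℂ) * (u : ℂ) by
          push_cast; ring] at h2
        exact h2
      rw [hFim, him, abs_mul]
      nlinarith [abs_nonneg (l u), Real.abs_sin_le_one (t * u), abs_nonneg (Real.sin (t * u))]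
    have hsim : Summable fun u : ℝ => |(F u t).im| :=
      Summable.of_nonneg_of_le (fun u => abs_nonneg _) himb hsum
    calc |(G t).im| = ‖∑' u : ℝ, (F u t).im‖ := by rw [h1, Real.norm_eq_abs]
      _ ≤ ∑' u : ℝ, ‖(F u t).im‖ := norm_tsum_le_tsum_norm (by simpa [Real.norm_eq_abs] using hsim)
      _ = ∑' u : ℝ, |(F u t).im| := by simp [Real.norm_eq_abs]
      _ ≤ C := Summable.tsum_le_tsum himb hsim hsum
  have hA0 : A 0 = 0 := by
    have hz : ∀ u : ℝ, F u 0 = 0 := by intro u; simp [hFdef]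
    simp [hAdef, hGdef, hz]
  -- θ agrees with the imaginary part of A
  have hkey : ∀ t : ℝ, θ t = (A t).im := by
    set h : ℝ → ℝ := fun t => (A t).im - θ t with hhdef
    have hZ : ∀ t : ℝ, ∃ n : ℤ, h t = n * (2 * Real.pi) := by
      intro t
      have hexp : Complex.exp (A t)
          = Complex.exp (((A t).re : ℂ) + (θ t : ℂ) * Complex.I) := by
        have h2 : Complex.exp (((A t).re : ℂ) + (θ t : ℂ) * Complex.I)
            = ((Real.exp (A t).re : ℝ) : ℂ) * Complex.exp (Complex.I * (θ t : ℂ)) := by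
          rw [Complex.exp_add, Complex.ofReal_exp, mul_comm ((θ t : ℂ)) Complex.I]
        rw [h2, ← Complex.norm_exp, ← hfA t]
        exact hθ t
      obtain ⟨n, hn⟩ := Complex.exp_eq_exp_iff_exists_int.mp hexp
      refine ⟨n, ?_⟩
      have him : (A t).im = θ t + n * (2 * Real.pi) := by
        have h3 := congrArg Complex.im hn
        simp at h3
        linarith
      show (A t).im - θ t = n * (2 * Real.pi)
      rw [him]; ring
    have hhcont : Continuous h := (Complex.continuous_im.comp hAcont).sub hθcont
    have hlc : IsLocallyConstant h := by
      rw [IsLocallyConstant.iff_eventually_eq]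
      intro x
      have hev : ∀ᶠ y in nhds x, |h y - h x| < 2 * Real.pi := by
        have ht : Filter.Tendsto h (nhds x) (nhds (h x)) := hhcont.continuousAt
        have hpos : (0 : ℝ) < 2 * Real.pi := by linarith [Real.pi_pos]
        have hmem := ht (Metric.ball_mem_nhds (h x) hpos)
        filter_upwards [hmem] with y hy
        simpa [Real.dist_eq] using hy
      filter_upwards [hev] with y hy
      obtain ⟨n, hn⟩ := hZ y
      obtain ⟨m, hm⟩ := hZ x
      have hdiff : h y - h x = ((n - m : ℤ) : ℝ) * (2 * Real.pi) := by
        push_cast; rw [hn, hm]; ring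
      have hlt : |((n - m : ℤ) : ℝ)| * (2 * Real.pi) < 2 * Real.pi := by
        have h4 := hy
        rw [hdiff, abs_mul, abs_of_pos (by linarith [Real.pi_pos] : (0:ℝ) < 2 * Real.pi)] at h4
        exact h4
      have hnm : ((n - m : ℤ) : ℝ) = 0 := by
        by_contra hne
        have hne' : (n - m : ℤ) ≠ 0 := by exact_mod_cast hne
        have h1 : (1 : ℝ) ≤ |((n - m : ℤ) : ℝ)| := by
          rw [← Int.cast_abs]
          exact_mod_cast Int.one_le_abs hne'
        nlinarith [Real.pi_pos]
      have : h y - h x = 0 := by rw [hdiff, hnm, zero_mul]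
      linarith
    have h0 : h 0 = 0 := by simp [hhdef, hA0, hθ0]
    intro t
    have he := hlc.apply_eq_of_preconnectedSpace t 0
    rw [h0] at he
    have : (A t).im - θ t = 0 := he
    linarith
  have hbound : ∀ t : ℝ, |θ t - t * γ| ≤ C := by
    intro t
    rw [hkey t, hAim t]
    simpa using hGim_bound t
  refine ⟨hbound, ?_⟩
  have hten : Tendsto (fun T : ℝ => θ T / T - γ) atTop (nhds 0) := by
    apply squeeze_zero_norm' (a := fun T => C / T)
    · filter_upwards [Filter.eventually_gt_atTop (0 : ℝ)] with T hT
      have hTne : T ≠ 0 := ne_of_gt hT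
      have he : θ T / T - γ = (θ T - T * γ) / T := by field_simp
      rw [Real.norm_eq_abs, he, abs_div, abs_of_pos hT]
      gcongr
      exact hbound T
    · simpa [div_eq_mul_inv] using tendsto_inv_atTop_zero.const_mul C
  have h2 := hten.add (tendsto_const_nhds (x := γ))
  simpa using h2
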